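/- Under the General Assumption, suppose l₁ + l₂ = t and l₁ > 1 and l₂ > 1. If l₁ = s₁^(1) and l₂ ≥ s₂^(d), then f^(1)[U]_l = 0 or f^(d)[U]_l = 0. -/

import Mathlib

open scoped BigOperators

namespace BMS

/-- Index pairs in ℕ × ℕ. -/
abbrev Pair : Type := ℕ × ℕ

/-- The componentwise partial order `⪯` on ℕ×ℕ. -/
def Preceq (n m : Pair) : Prop := n.1 ≤ m.1 ∧ n.2 ≤ m.2

instance (n m : Pair) : Decidable (Preceq n m) :=
  inferInstanceAs (Decidable (n.1 ≤ m.1 ∧ n.2 ≤ m.2))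

/-- The lexicographic order on exponents, with `X₁ > X₂`. -/
def LexLt (a b : Pair) : Prop := a.1 < b.1 ∨ (a.1 = b.1 ∧ a.2 < b.2)

/-- The graded order on exponents, with `X₂ > X₁`. -/
def GrLt (a b : Pair) : Prop :=
  a.1 + a.2 < b.1 + b.2 ∨ (a.1 + a.2 = b.1 + b.2 ∧ a.2 < b.2)

section
variable {L : Type*} [Field L]

/-- `s` is the `lt`-largest exponent occurring in (the support of) the polynomial `f`,
i.e. `LP f = s`. -/
def IsLP (lt : Pair → Pair → Prop) (f : Pair →₀ L) (s : Pair) : Prop :=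
  s ∈ f.support ∧ ∀ m ∈ f.support, m = s ∨ lt m s

/-- The value `f[U]_n`, where `s = LP f`. -/
def evalArr (U : Pair → L) (f : Pair →₀ L) (s n : Pair) : L :=
  if Preceq s n then ∑ m ∈ f.support, f m * U (m.1 + n.1 - s.1, m.2 + n.2 - s.2) else 0

/-- `f` (with `LP f = s`) generates the finite subarray `u^l`,
i.e. `f[U]_k = 0` for every `k` with `LP f ⪯ k` and `k <_T l`. -/
def GeneratesUpTo (lt : Pair → Pair → Prop) (U : Pair → L) (f : Pair →₀ L)
    (s l : Pair) : Prop :=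
  ∀ k : Pair, Preceq s k → lt k l → evalArr U f s k = 0

/-- `f` generates the whole doubly periodic array `U`, i.e. `f ∈ Λ(U)`
(the zero polynomial generates `U` by convention). -/
def GeneratesTable (lt : Pair → Pair → Prop) (U : Pair → L) (f : Pair →₀ L) : Prop :=
  f = 0 ∨ ∃ s : Pair, IsLP lt f s ∧ ∀ n : Pair, Preceq s n → evalArr U f s n = 0

/-- The footprint `Δ(F)` determined by the defining points `s 0, …, s (d-1)`:
`Δ(F) = ⋃_{i=1}^{d-1} Δ_{(s₁⁽ⁱ⁾ - 1, s₂⁽ⁱ⁺¹⁾ - 1)}`. -/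
def DeltaF (d : ℕ) (s : Fin d → Pair) : Set Pair :=
  {n | ∃ i : Fin d, ∃ h : (i : ℕ) + 1 < d,
    n.1 < (s i).1 ∧ n.2 < (s ⟨(i : ℕ) + 1, h⟩).2}

/-- `{f 0, …, f (d-1)}`, with `LP (f i) = s i`, is a minimal set of polynomials
for the subarray `u^l`. -/
structure IsMinimalSet (lt : Pair → Pair → Prop) (U : Pair → L) (l : Pair) (d : ℕ)
    (f : Fin d → (Pair →₀ L)) (s : Fin d → Pair) : Prop where
  isLP : ∀ i, IsLP lt (f i) (s i)
  gen : ∀ i, GeneratesUpTo lt U (f i) (s i) l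
  anti1 : ∀ i j : Fin d, i < j → (s j).1 < (s i).1
  mono2 : ∀ i j : Fin d, i < j → (s i).2 < (s j).2
  last1 : ∀ h : 0 < d, (s ⟨d - 1, Nat.sub_lt h Nat.one_pos⟩).1 = 0
  first2 : ∀ h : 0 < d, (s ⟨0, h⟩).2 = 0
  minimal : ∀ (g : Pair →₀ L) (sg : Pair), IsLP lt g sg → sg ∈ DeltaF d s →
    ¬ GeneratesUpTo lt U g sg l

/-- A finite set `G ⊆ Λ(U)` is a Groebner basis for the ideal `Λ(U)` w.r.t. `lt`:
for every nonzero `f ∈ Λ(U)` there is `g ∈ G` with `X^{LP g} ∣ X^{LP f}`. -/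
def IsGroebnerBasis (lt : Pair → Pair → Prop) (U : Pair → L)
    (G : Set (Pair →₀ L)) : Prop :=
  G.Finite ∧ (∀ g ∈ G, GeneratesTable lt U g) ∧
  ∀ fp : Pair →₀ L, fp ≠ 0 → GeneratesTable lt U fp →
    ∀ sf : Pair, IsLP lt fp sf → ∃ g ∈ G, ∃ sg : Pair, IsLP lt g sg ∧ Preceq sg sf

/-- `c • X^a * g` : multiply the polynomial `g` by the monomial `c·X₁^{a.1}·X₂^{a.2}`. -/
noncomputable def shiftScale (c : L) (a : Pair) (g : Pair →₀ L) : Pair →₀ L :=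
  c • Finsupp.mapDomain (· + a) g

/-- The set of indexes `S(t)`. -/
def Sset (t : ℕ) : Set Pair :=
  {p | (p.1 = 0 ∧ p.2 ≤ 2 * t - 1) ∨ (p.2 = 0 ∧ p.1 ≤ 2 * t - 1) ∨
    (p.1 ≠ 0 ∧ p.2 ≠ 0 ∧ p.1 + p.2 ≤ t)}

/-- `S(t)` satisfies the l-condition: `u_{(0,j)} ≠ 0` for some `j < t`. -/
def LCond (U : Pair → L) (t : ℕ) : Prop := ∃ j : ℕ, j < t ∧ U (0, j) ≠ 0

/-- `S(t)` satisfies the g-condition: `u_{(i,j)} ≠ 0` for some `(i,j)` with `i + j = 1`. -/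
def GCond (U : Pair → L) (t : ℕ) : Prop := ∃ p : Pair, p.1 + p.2 = 1 ∧ U p ≠ 0

end

section
variable {F L : Type*} [Field F] [Field L] [Algebra F L]

/-- Evaluation of (the canonical representative of) `e ∈ 𝔽(r₁,r₂)` at a point of `L × L`. -/
def polyEval (e : Pair →₀ F) (x y : L) : L :=
  ∑ m ∈ e.support, algebraMap F L (e m) * x ^ m.1 * y ^ m.2

/-- `U` is the syndrome table afforded by `τ` and `e`:
`u_n = e(α₁^{τ₁+n₁}, α₂^{τ₂+n₂})`, where `e` is a canonical representative
(exponents below `(r₁, r₂)`) and `τ ∈ ℤ_{r₁} × ℤ_{r₂}`. -/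
def IsSyndromeTable (r₁ r₂ : ℕ) (α₁ α₂ : L) (τ : Pair) (e : Pair →₀ F)
    (U : Pair → L) : Prop :=
  (∀ m ∈ e.support, m.1 < r₁ ∧ m.2 < r₂) ∧ τ.1 < r₁ ∧ τ.2 < r₂ ∧
  ∀ n : Pair, U n = polyEval e (α₁ ^ (τ.1 + n.1)) (α₂ ^ (τ.2 + n.2))

/-- Basic data of the general assumption: `q` a prime power, `𝔽 = 𝔽_q`,
`gcd(q, r₁r₂) = 1`, `αᵢ` a primitive `rᵢ`-th root of unity in the extension `𝕃`,
`U` the syndrome table afforded by `τ` and `e`, and `ω(e) ≤ t ≤ ⌊rᵢ/2⌋`. -/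
structure Setup (q r₁ r₂ t : ℕ) {F L : Type*} [Field F] [Fintype F] [Field L]
    [Algebra F L] (α₁ α₂ : L) (τ : Pair) (e : Pair →₀ F) (U : Pair → L) : Prop where
  prime_pow : ∃ p n : ℕ, p.Prime ∧ 0 < n ∧ q = p ^ n
  card_F : Fintype.card F = q
  coprime : Nat.Coprime q (r₁ * r₂)
  prim1 : IsPrimitiveRoot α₁ r₁
  prim2 : IsPrimitiveRoot α₂ r₂
  syndrome : IsSyndromeTable r₁ r₂ α₁ α₂ τ e U
  weight_le : e.support.card ≤ t
  t_le1 : t ≤ r₁ / 2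
  t_le2 : t ≤ r₂ / 2

end



section AuxStatement7

private lemma pair_eq' {a b c d : ℕ} (h1 : a = c) (h2 : b = d) : ((a, b) : Pair) = (c, d) := by
  subst h1; subst h2; rfl

private lemma ord_add {lt : Pair → Pair → Prop} (h : lt = LexLt ∨ lt = GrLt) :
    ∀ a b c : Pair, lt a b → lt (a.1 + c.1, a.2 + c.2) (b.1 + c.1, b.2 + c.2) := by
  rcases h with rfl | rfl <;> intro a b c hab <;>
    simp only [LexLt, GrLt] at hab ⊢ <;> omega

private lemma ord_total {lt : Pair → Pair → Prop} (h : lt = LexLt ∨ lt = GrLt) :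
    ∀ a b : Pair, a = b ∨ lt a b ∨ lt b a := by
  rcases h with rfl | rfl <;> intro a b <;>
    simp only [LexLt, GrLt, Prod.ext_iff] <;> omega

private lemma ord_trans {lt : Pair → Pair → Prop} (h : lt = LexLt ∨ lt = GrLt) :
    ∀ a b c : Pair, lt a b → lt b c → lt a c := by
  rcases h with rfl | rfl <;> intro a b c h1 h2 <;>
    simp only [LexLt, GrLt] at h1 h2 ⊢ <;> omega

private lemma exists_max_finset {lt : Pair → Pair → Prop}
    (htot : ∀ a b : Pair, a = b ∨ lt a b ∨ lt b a)
    (htrans : ∀ a b c : Pair, lt a b → lt b c → lt a c)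
    (sset : Finset Pair) :
    sset.Nonempty → ∃ a ∈ sset, ∀ b ∈ sset, b = a ∨ lt b a := by
  classical
  induction sset using Finset.induction_on with
  | empty => intro hs; exact absurd hs (by simp)
  | @insert x s hx ih =>
    intro _
    rcases s.eq_empty_or_nonempty with rfl | hs'
    · exact ⟨x, by simp, by simp⟩
    · obtain ⟨a, haa, hmax⟩ := ih hs'
      rcases htot x a with heq | hxa | hax
      · refine ⟨a, Finset.mem_insert_of_mem haa, ?_⟩
        intro b hb
        rcases Finset.mem_insert.mp hb with rfl | hb
        · exact Or.inl heq
        · exact hmax b hb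
      · refine ⟨a, Finset.mem_insert_of_mem haa, ?_⟩
        intro b hb
        rcases Finset.mem_insert.mp hb with rfl | hb
        · exact Or.inr hxa
        · exact hmax b hb
      · refine ⟨x, Finset.mem_insert_self x s, ?_⟩
        intro b hb
        rcases Finset.mem_insert.mp hb with rfl | hb
        · exact Or.inl rfl
        · rcases hmax b hb with rfl | hba
          · exact Or.inr hax
          · exact Or.inr (htrans b a x hba hax)

private lemma exists_isLP {L : Type*} [Field L] {lt : Pair → Pair → Prop}
    (htot : ∀ a b : Pair, a = b ∨ lt a b ∨ lt b a)
    (htrans : ∀ a b c : Pair, lt a b → lt b c → lt a c)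
    {g : Pair →₀ L} (hg : g ≠ 0) : ∃ sg : Pair, IsLP lt g sg := by
  obtain ⟨a, haa, hmax⟩ := exists_max_finset htot htrans g.support
    (Finsupp.support_nonempty_iff.mpr hg)
  exact ⟨a, haa, hmax⟩

/-- The key exchange lemma: if `f` generates `u^l` with nonzero discrepancy at `l`,
then no `g` with `LP g ⪯ l - LP f` can generate the whole table. -/
private lemma lemmaA {L : Type*} [Field L] {lt : Pair → Pair → Prop}
    (hadd : ∀ a b c : Pair, lt a b → lt (a.1 + c.1, a.2 + c.2) (b.1 + c.1, b.2 + c.2))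
    {U : Pair → L} {f g : Pair →₀ L} {sf sg l : Pair}
    (hf : IsLP lt f sf) (hfgen : GeneratesUpTo lt U f sf l)
    (hfd : evalArr U f sf l ≠ 0)
    (hg : IsLP lt g sg) (hgz : ∀ n : Pair, Preceq sg n → evalArr U g sg n = 0)
    (h1 : sf.1 + sg.1 ≤ l.1) (h2 : sf.2 + sg.2 ≤ l.2) : False := by
  classical
  set a : ℕ := l.1 - sf.1 - sg.1 with haa
  set b : ℕ := l.2 - sf.2 - sg.2 with hbb
  -- the double sum identity
  have key : ∀ m : Pair, evalArr U f sf (m.1 + a + sf.1, m.2 + b + sf.2)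
      = ∑ m' ∈ f.support, f m' * U (m.1 + m'.1 + a, m.2 + m'.2 + b) := by
    intro m
    rw [evalArr, if_pos (show Preceq sf (m.1 + a + sf.1, m.2 + b + sf.2) from
      ⟨by simp, by simp⟩)]
    refine Finset.sum_congr rfl fun m' _ => ?_
    congr 1
    exact congrArg U (pair_eq' (by simp; omega) (by simp; omega))
  have key2 : ∀ m' : Pair, evalArr U g sg (m'.1 + a + sg.1, m'.2 + b + sg.2)
      = ∑ m ∈ g.support, g m * U (m.1 + m'.1 + a, m.2 + m'.2 + b) := by
    intro m'
    rw [evalArr, if_pos (show Preceq sg (m'.1 + a + sg.1, m'.2 + b + sg.2) from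
      ⟨by simp, by simp⟩)]
    refine Finset.sum_congr rfl fun m _ => ?_
    congr 1
    exact congrArg U (pair_eq' (by simp; omega) (by simp; omega))
  have hl' : ((sg.1 + (a + sf.1), sg.2 + (b + sf.2)) : Pair) = l :=
    pair_eq' (by omega) (by omega)
  have hS1 : ∑ m ∈ g.support, g m * evalArr U f sf (m.1 + a + sf.1, m.2 + b + sf.2)
      = g sg * evalArr U f sf l := by
    rw [Finset.sum_eq_single_of_mem sg hg.1]
    · congr 1
      exact congrArg _ (pair_eq' (by omega) (by omega))
    · intro m hm hne
      have hlt := (hg.2 m hm).resolve_left hne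
      have hadd' := hadd m sg (a + sf.1, b + sf.2) hlt
      have hmeq : ((m.1 + (a + sf.1), m.2 + (b + sf.2)) : Pair)
          = (m.1 + a + sf.1, m.2 + b + sf.2) := pair_eq' (by omega) (by omega)
      rw [hmeq, hl'] at hadd'
      rw [hfgen (m.1 + a + sf.1, m.2 + b + sf.2) ⟨by simp, by simp⟩ hadd', mul_zero]
  have hS2 : ∑ m ∈ g.support, g m * evalArr U f sf (m.1 + a + sf.1, m.2 + b + sf.2)
      = 0 := by
    calc ∑ m ∈ g.support, g m * evalArr U f sf (m.1 + a + sf.1, m.2 + b + sf.2)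
        = ∑ m ∈ g.support, ∑ m' ∈ f.support,
            g m * (f m' * U (m.1 + m'.1 + a, m.2 + m'.2 + b)) := by
          refine Finset.sum_congr rfl fun m _ => ?_
          rw [key m, Finset.mul_sum]
      _ = ∑ m' ∈ f.support, ∑ m ∈ g.support,
            g m * (f m' * U (m.1 + m'.1 + a, m.2 + m'.2 + b)) := Finset.sum_comm
      _ = ∑ m' ∈ f.support, f m' * evalArr U g sg (m'.1 + a + sg.1, m'.2 + b + sg.2) := by
          refine Finset.sum_congr rfl fun m' _ => ?_
          rw [key2 m', Finset.mul_sum]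
          exact Finset.sum_congr rfl fun m _ => by ring
      _ = 0 := by
          refine Finset.sum_eq_zero fun m' _ => ?_
          rw [hgz (m'.1 + a + sg.1, m'.2 + b + sg.2) ⟨by simp, by simp⟩, mul_zero]
  rw [hS1] at hS2
  rcases mul_eq_zero.mp hS2 with h | h
  · exact Finsupp.mem_support_iff.mp hg.1 h
  · exact hfd h

/-- If `g` vanishes at all error points, then `g` generates the whole table. -/
private lemma gen_of_vanish {F L : Type*} [Field F] [Field L] [Algebra F L]
    {r₁ r₂ : ℕ} {α₁ α₂ : L} {τ : Pair} {e : Pair →₀ F} {U : Pair → L}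
    (hsyn : IsSyndromeTable r₁ r₂ α₁ α₂ τ e U) (g : Pair →₀ L) (sg : Pair)
    (hvan : ∀ k ∈ e.support,
      ∑ m ∈ g.support, g m * (α₁ ^ k.1) ^ m.1 * (α₂ ^ k.2) ^ m.2 = 0) :
    ∀ n : Pair, Preceq sg n → evalArr U g sg n = 0 := by
  intro n hn
  obtain ⟨hn1, hn2⟩ := hn
  rw [evalArr, if_pos ⟨hn1, hn2⟩]
  have hU := hsyn.2.2.2
  calc ∑ m ∈ g.support, g m * U (m.1 + n.1 - sg.1, m.2 + n.2 - sg.2)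
      = ∑ m ∈ g.support, ∑ k ∈ e.support,
          (algebraMap F L (e k) * (α₁ ^ k.1) ^ (τ.1 + (n.1 - sg.1))
            * (α₂ ^ k.2) ^ (τ.2 + (n.2 - sg.2)))
          * (g m * (α₁ ^ k.1) ^ m.1 * (α₂ ^ k.2) ^ m.2) := by
        refine Finset.sum_congr rfl fun m _ => ?_
        rw [hU, polyEval, Finset.mul_sum]
        refine Finset.sum_congr rfl fun k _ => ?_
        have e1 : (α₁ ^ (τ.1 + (m.1 + n.1 - sg.1, m.2 + n.2 - sg.2).1)) ^ k.1
            = (α₁ ^ k.1) ^ ((τ.1 + (n.1 - sg.1)) + m.1) := by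
          rw [pow_right_comm]
          congr 1
          simp only []
          omega
        have e2 : (α₂ ^ (τ.2 + (m.1 + n.1 - sg.1, m.2 + n.2 - sg.2).2)) ^ k.2
            = (α₂ ^ k.2) ^ ((τ.2 + (n.2 - sg.2)) + m.2) := by
          rw [pow_right_comm]
          congr 1
          simp only []
          omega
        rw [e1, e2, pow_add, pow_add]
        ring
    _ = ∑ k ∈ e.support,
          (algebraMap F L (e k) * (α₁ ^ k.1) ^ (τ.1 + (n.1 - sg.1))
            * (α₂ ^ k.2) ^ (τ.2 + (n.2 - sg.2)))
          * ∑ m ∈ g.support, g m * (α₁ ^ k.1) ^ m.1 * (α₂ ^ k.2) ^ m.2 := by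
        rw [Finset.sum_comm]
        refine Finset.sum_congr rfl fun k _ => ?_
        rw [Finset.mul_sum]
    _ = 0 := Finset.sum_eq_zero fun k hk => by rw [hvan k hk, mul_zero]

/-- More monomials than points: there is a nonzero polynomial supported in `Δ`
vanishing at all the given points. -/
private lemma exists_kernel {L : Type*} [Field L] (Δ K : Finset Pair)
    (hcard : K.card < Δ.card) (β γ : Pair → L) :
    ∃ g : Pair →₀ L, g ≠ 0 ∧ ↑g.support ⊆ (Δ : Set Pair) ∧
      ∀ k ∈ K, ∑ m ∈ g.support, g m * β k ^ m.1 * γ k ^ m.2 = 0 := by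
  classical
  set T : (↥Δ →₀ L) →ₗ[L] (↥K → L) :=
    Finsupp.linearCombination L
      (fun p : ↥Δ => fun k : ↥K => β (k : Pair) ^ (p : Pair).1 * γ (k : Pair) ^ (p : Pair).2)
    with hT
  have hninj : ¬ Function.Injective T := by
    intro hinj
    have hle := LinearMap.finrank_le_finrank_of_injective hinj
    rw [Module.finrank_finsupp_self, Module.finrank_fintype_fun_eq_card,
      Fintype.card_coe, Fintype.card_coe] at hle
    omega
  have hker : LinearMap.ker T ≠ ⊥ := fun hbot => hninj (LinearMap.ker_eq_bot.mp hbot)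
  obtain ⟨v, hvker, hv0⟩ := Submodule.exists_mem_ne_zero_of_ne_bot hker
  have hTv : T v = 0 := LinearMap.mem_ker.mp hvker
  set emb : ↥Δ ↪ Pair := Function.Embedding.subtype _ with hemb
  refine ⟨Finsupp.embDomain emb v, ?_, ?_, ?_⟩
  · intro h
    exact hv0 (Finsupp.embDomain_eq_zero.mp h)
  · intro x hx
    rw [Finset.mem_coe, Finsupp.support_embDomain, Finset.mem_map] at hx
    obtain ⟨p, _, rfl⟩ := hx
    exact p.2
  · intro k hk
    have hsum : ∑ m ∈ (Finsupp.embDomain emb v).support,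
        (Finsupp.embDomain emb v) m * β k ^ m.1 * γ k ^ m.2
        = ∑ p ∈ v.support, v p * β k ^ (p : Pair).1 * γ k ^ (p : Pair).2 := by
      rw [Finsupp.support_embDomain, Finset.sum_map]
      refine Finset.sum_congr rfl fun p _ => ?_
      rw [Finsupp.embDomain_apply_self]
      rfl
    rw [hsum]
    have := congrFun hTv ⟨k, hk⟩
    rw [hT] at this
    simp only [Finsupp.linearCombination_apply, Finsupp.sum, Finset.sum_apply,
      Pi.smul_apply, smul_eq_mul, Pi.zero_apply] at this
    calc ∑ p ∈ v.support, v p * β k ^ (p : Pair).1 * γ k ^ (p : Pair).2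
        = ∑ p ∈ v.support, v p * (β k ^ (p : Pair).1 * γ k ^ (p : Pair).2) := by
          exact Finset.sum_congr rfl fun p _ => by ring
      _ = 0 := this

end AuxStatement7

/-- if l₁ = s₁⁽¹⁾ and l₂ ≥ s₂⁽ᵈ⁾ then f⁽¹⁾[U]_l = 0 or f⁽ᵈ⁾[U]_l = 0. -/
theorem statement7{q r₁ r₂ t : ℕ} {F L : Type*} [Field F] [Fintype F] [Field L]
    [Algebra F L] {α₁ α₂ : L} {τ : Pair} {e : Pair →₀ F} {U : Pair → L}
    (hsetup : Setup q r₁ r₂ t α₁ α₂ τ e U)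
{lt : Pair → Pair → Prop}
    (hord : (lt = LexLt ∧ LCond U t) ∨ (lt = GrLt ∧ GCond U t))
    {l : Pair} (hl : l ∈ Sset t)
    {d : ℕ} {f : Fin d → (Pair →₀ L)} {s : Fin d → Pair}
    (hmin : IsMinimalSet lt U l d f s)
    (hsum : l.1 + l.2 = t) (hl1 : 1 < l.1) (hl2 : 1 < l.2) (hd0 : 0 < d)
    (ha : l.1 = (s ⟨0, hd0⟩).1)
    (hb : (s ⟨d - 1, Nat.sub_lt hd0 Nat.one_pos⟩).2 ≤ l.2) :
    evalArr U (f ⟨0, hd0⟩) (s ⟨0, hd0⟩) l = 0 ∨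
    evalArr U (f ⟨d - 1, Nat.sub_lt hd0 Nat.one_pos⟩)
      (s ⟨d - 1, Nat.sub_lt hd0 Nat.one_pos⟩) l = 0 := by
  classical
  by_contra hcon
  push_neg at hcon
  obtain ⟨hD1, hDd⟩ := hcon
  have hlt : lt = LexLt ∨ lt = GrLt := by
    rcases hord with ⟨h, -⟩ | ⟨h, -⟩
    · exact Or.inl h
    · exact Or.inr h
  have hadd := ord_add hlt
  have htot := ord_total hlt
  have htrans := ord_trans hlt
  set i0 : Fin d := ⟨0, hd0⟩ with hi0
  set idd : Fin d := ⟨d - 1, Nat.sub_lt hd0 Nat.one_pos⟩ with hidd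
  have hs11 : (s i0).1 = l.1 := ha.symm
  have hs12 : (s i0).2 = 0 := hmin.first2 hd0
  have hsd1 : (s idd).1 = 0 := hmin.last1 hd0
  set bb : ℕ := (s idd).2 with hbbdef
  -- the candidate set of monomials
  set Δ' : Finset Pair := (Finset.range 1 ×ˢ Finset.range (l.2 + 1)) ∪
    (Finset.range (l.1 + 1) ×ˢ Finset.range (l.2 - bb + 1)) with hΔ'
  have hcard : t + 1 ≤ Δ'.card := by
    have hinj : (Finset.range (t + 1)).card ≤ Δ'.card := by
      apply Finset.card_le_card_of_injOn
        (fun i => if i ≤ l.2 then ((0, i) : Pair) else (i - l.2, 0))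
      · intro i hi
        simp only [Finset.mem_coe, Finset.mem_range] at hi
        by_cases hc : i ≤ l.2 <;>
          simp only [hc, if_true, if_false, hΔ', Finset.mem_coe, Finset.mem_union, Finset.mem_product,
            Finset.mem_range] <;>
        [exact Or.inl ⟨by omega, by omega⟩; exact Or.inr ⟨by omega, by omega⟩]
      · intro i hi j hj hij
        simp only [Finset.mem_coe, Finset.mem_range] at hi hj
        by_cases hci : i ≤ l.2 <;> by_cases hcj : j ≤ l.2 <;>
          simp only [hci, hcj, if_true, if_false, Prod.mk.injEq] at hij <;> omega
    simpa using hinj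
  have hcard' : e.support.card < Δ'.card := by
    have := hsetup.weight_le
    omega
  obtain ⟨g, hg0, hgsupp, hgvan⟩ := exists_kernel Δ' e.support hcard'
    (fun k => α₁ ^ k.1) (fun k => α₂ ^ k.2)
  obtain ⟨sg, hsgLP⟩ := exists_isLP htot htrans hg0
  have hgz := gen_of_vanish hsetup.syndrome g sg hgvan
  have hsgΔ : sg ∈ Δ' := Finset.mem_coe.mp (hgsupp (Finset.mem_coe.mpr hsgLP.1))
  rw [hΔ', Finset.mem_union, Finset.mem_product, Finset.mem_product,
    Finset.mem_range, Finset.mem_range, Finset.mem_range, Finset.mem_range] at hsgΔ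
  rcases hsgΔ with ⟨hin1, hin2⟩ | ⟨hin1, hin2⟩
  · exact lemmaA hadd (hmin.isLP i0) (hmin.gen i0) hD1 hsgLP hgz
      (by omega) (by omega)
  · have hbl : bb ≤ l.2 := hb
    exact lemmaA hadd (hmin.isLP idd) (hmin.gen idd) hDd hsgLP hgz
      (by omega) (by omega)

end BMS
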